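/- Let A ⊂ ℝ be an almost periodic set. Then there exists a strictly positive real number d (the density of A) such that for every η > 0 there is N_η with: for every half-interval I of length l(I) > N_η, |#(A ∩ I)/l(I) − d| < η. In other words, #(A ∩ I)/l(I) → d uniformly as l(I) → ∞. -/

import Mathlib

/-- A set `E ⊆ ℝ` is relatively dense. -/
def RelativelyDense (E : Set ℝ) : Prop :=
  ∃ L > (0:ℝ), ∀ x : ℝ, ∃ τ ∈ E, τ ∈ Set.Ioo x (x + L)

/-- The multiset `{a n}` is an almost periodic set. -/
def IsAPSet (a : ℤ → ℝ) : Prop :=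
  ∀ ε > (0:ℝ), RelativelyDense
    {τ : ℝ | ∃ σ : ℤ ≃ ℤ, ∀ n : ℤ, |a n + τ - a (σ n)| < ε}

section cnt
variable (a : ℤ → ℝ) (hfin : ∀ x y : ℝ, {n : ℤ | a n ∈ Set.Icc x y}.Finite)
include hfin

lemma finIco (x y : ℝ) : {n : ℤ | a n ∈ Set.Ico x y}.Finite :=
  (hfin x y).subset fun n hn => ⟨hn.1, hn.2.le⟩

lemma cnt_add (x h₁ h₂ : ℝ) (h1 : 0 ≤ h₁) (h2 : 0 ≤ h₂) :
    Nat.card {n : ℤ | a n ∈ Set.Ico x (x + (h₁ + h₂))} =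
      Nat.card {n : ℤ | a n ∈ Set.Ico x (x + h₁)} +
      Nat.card {n : ℤ | a n ∈ Set.Ico (x + h₁) ((x + h₁) + h₂)} := by
  have hset : {n : ℤ | a n ∈ Set.Ico x (x + (h₁ + h₂))} =
      {n : ℤ | a n ∈ Set.Ico x (x + h₁)} ∪ {n : ℤ | a n ∈ Set.Ico (x + h₁) ((x + h₁) + h₂)} := by
    have : Set.Ico x (x + (h₁ + h₂)) =
        Set.Ico x (x + h₁) ∪ Set.Ico (x + h₁) ((x + h₁) + h₂) := by
      rw [Set.Ico_union_Ico_eq_Ico (by linarith) (by linarith)]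
      ring_nf
    ext n; simp [this]
  have hdisj : Disjoint {n : ℤ | a n ∈ Set.Ico x (x + h₁)}
      {n : ℤ | a n ∈ Set.Ico (x + h₁) ((x + h₁) + h₂)} := by
    have := Set.Ico_disjoint_Ico_same (a := x) (b := x + h₁) (c := (x + h₁) + h₂)
    exact Set.disjoint_left.mpr fun n hn hn' => (Set.disjoint_left.mp this) hn hn'
  rw [Nat.card_coe_set_eq, Nat.card_coe_set_eq, Nat.card_coe_set_eq, hset,
    Set.ncard_union_eq hdisj (finIco a hfin _ _) (finIco a hfin _ _)]

lemma cnt_subset {x y x' y' : ℝ} (hs : Set.Ico x y ⊆ Set.Ico x' y') :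
    Nat.card {n : ℤ | a n ∈ Set.Ico x y} ≤ Nat.card {n : ℤ | a n ∈ Set.Ico x' y'} := by
  rw [Nat.card_coe_set_eq, Nat.card_coe_set_eq]
  exact Set.ncard_le_ncard (fun n hn => hs hn) (finIco a hfin _ _)

lemma cnt_comp (L : ℝ)
    (hE : ∀ z : ℝ, ∃ τ ∈ {τ : ℝ | ∃ σ : ℤ ≃ ℤ, ∀ n : ℤ, |a n + τ - a (σ n)| < 1},
      τ ∈ Set.Ioo z (z + L))
    (x y h : ℝ) (hh : 0 ≤ h) :
    Nat.card {n : ℤ | a n ∈ Set.Ico x (x + h)} ≤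
      Nat.card {n : ℤ | a n ∈ Set.Ico y (y + (h + (L + 2)))} := by
  obtain ⟨τ, ⟨σ, hσ⟩, hτ1, hτ2⟩ := hE (y - x + 1)
  rw [Nat.card_coe_set_eq, Nat.card_coe_set_eq]
  refine Set.ncard_le_ncard_of_injOn σ ?_ σ.injective.injOn (finIco a hfin _ _)
  intro n hn
  obtain ⟨h1, h2⟩ := abs_lt.mp (hσ n)
  simp only [Set.mem_setOf_eq, Set.mem_Ico] at hn ⊢
  exact ⟨by linarith [hn.1], by linarith [hn.2]⟩

lemma cnt_pt (L : ℝ)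
    (hE : ∀ z : ℝ, ∃ τ ∈ {τ : ℝ | ∃ σ : ℤ ≃ ℤ, ∀ n : ℤ, |a n + τ - a (σ n)| < 1},
      τ ∈ Set.Ioo z (z + L))
    (y : ℝ) : 1 ≤ Nat.card {n : ℤ | a n ∈ Set.Ico y (y + (L + 2))} := by
  obtain ⟨τ, ⟨σ, hσ⟩, hτ1, hτ2⟩ := hE (y + 1 - a 0)
  rw [Nat.card_coe_set_eq]
  have hmem : σ 0 ∈ {n : ℤ | a n ∈ Set.Ico y (y + (L + 2))} := by
    obtain ⟨h1, h2⟩ := abs_lt.mp (hσ 0)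
    simp only [Set.mem_setOf_eq, Set.mem_Ico]
    exact ⟨by linarith, by linarith⟩
  have := (Set.ncard_pos (finIco a hfin y (y + (L + 2)))).mpr ⟨σ 0, hmem⟩
  omega

end cnt


lemma density_abstract (φ : ℝ → ℝ → ℕ) (c : ℝ) (hc : 0 < c)
    (hadd : ∀ x h₁ h₂ : ℝ, 0 ≤ h₁ → 0 ≤ h₂ → φ x (h₁ + h₂) = φ x h₁ + φ (x + h₁) h₂)
    (hcomp : ∀ x y h : ℝ, 0 ≤ h → φ x h ≤ φ y (h + c))
    (hpt : ∀ y : ℝ, 1 ≤ φ y c) :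
    ∃ d > (0:ℝ), ∀ η > (0:ℝ), ∃ N : ℝ, ∀ x h : ℝ, N < h →
      |(φ x h : ℝ) / h - d| < η := by
  -- monotonicity
  have mono : ∀ x h h' : ℝ, 0 ≤ h → h ≤ h' → φ x h ≤ φ x h' := by
    intro x h h' h0 hh
    have e := hadd x h (h' - h) h0 (by linarith)
    rw [add_sub_cancel] at e
    omega
  -- upper and lower bound functions
  have hU : ∀ (y m : ℝ), 0 ≤ m → (φ y m : ℝ) ≤ (φ 0 (m + c) : ℝ) := by
    intro y m hm; exact_mod_cast hcomp y 0 m hm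
  have hLo : ∀ (y m : ℝ), c ≤ m → (φ 0 (m - c) : ℝ) ≤ (φ y m : ℝ) := by
    intro y m hm
    have := hcomp 0 y (m - c) (by linarith)
    rw [sub_add_cancel] at this
    exact_mod_cast this
  -- the dyadic sequence of lengths
  set m : ℕ → ℝ := fun k => 2 * c * 2 ^ k with hmdef
  have hmpos : ∀ k, 0 < m k := by
    intro k; simp only [hmdef]; positivity
  have hmc : ∀ k, 2 * c ≤ m k := by
    intro k; simp only [hmdef]
    nlinarith [one_le_pow₀ (a := (2:ℝ)) (n := k) one_le_two, hc]
  have hmsucc : ∀ k, m (k + 1) = 2 * m k := by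
    intro k; simp only [hmdef]; ring
  set p : ℕ → ℝ := fun k => (φ 0 (m k - c) : ℝ) / m k with hpdef
  set q : ℕ → ℝ := fun k => (φ 0 (m k + c) : ℝ) / m k with hqdef
  have hq0 : ∀ k, 0 ≤ q k := by
    intro k; apply div_nonneg (Nat.cast_nonneg _) (hmpos k).le
  have hp0 : ∀ k, 0 ≤ p k := by
    intro k; apply div_nonneg (Nat.cast_nonneg _) (hmpos k).le
  -- p is the lower density on blocks, q the upper
  have hLoq : ∀ (y : ℝ) k, (φ 0 (m k - c) : ℝ) ≤ (φ y (m k) : ℝ) := by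
    intro y k; exact hLo y (m k) (by linarith [hmc k, hc])
  have hUq : ∀ (y : ℝ) k, (φ y (m k) : ℝ) ≤ (φ 0 (m k + c) : ℝ) := by
    intro y k; exact hU y (m k) (by linarith [hmc k, hc])
  -- doubling inequalities
  have hq_anti : ∀ k, q (k + 1) ≤ q k := by
    intro k
    have e := hadd 0 (m k + c) (m k) (by linarith [hmc k, hc]) (hmpos k).le
    have h2 : m (k + 1) + c = (m k + c) + m k := by rw [hmsucc]; ring
    have hb : (φ (0 + (m k + c)) (m k) : ℝ) ≤ (φ 0 (m k + c) : ℝ) := hUq _ k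
    have e2 : (φ 0 (m (k + 1) + c) : ℝ) ≤ 2 * (φ 0 (m k + c) : ℝ) := by
      rw [h2, e]; push_cast; linarith
    rw [hmsucc k] at e2
    simp only [hqdef]
    rw [hmsucc k, div_le_div_iff₀ (by linarith [hmpos k]) (hmpos k)]
    nlinarith [hmpos k, (by positivity : (0:ℝ) ≤ (φ 0 (m k + c) : ℝ))]
  have hp_mono : ∀ k, p k ≤ p (k + 1) := by
    intro k
    have hck : c ≤ m k := by linarith [hmc k, hc]
    have e := hadd 0 (m k - c) (m k) (by linarith) (hmpos k).le
    have h2 : m (k + 1) - c = (m k - c) + m k := by rw [hmsucc]; ring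
    have hb : (φ 0 (m k - c) : ℝ) ≤ (φ (0 + (m k - c)) (m k) : ℝ) := hLoq _ k
    have e2 : 2 * (φ 0 (m k - c) : ℝ) ≤ (φ 0 (m (k + 1) - c) : ℝ) := by
      rw [h2, e]; push_cast; linarith
    rw [hmsucc k] at e2
    simp only [hpdef]
    rw [hmsucc k, div_le_div_iff₀ (hmpos k) (by linarith [hmpos k])]
    nlinarith [hmpos k, (by positivity : (0:ℝ) ≤ (φ 0 (m k - c) : ℝ))]
  have hpq : ∀ k, p k ≤ q k := by
    intro k
    simp only [hpdef, hqdef]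
    have : (φ 0 (m k - c) : ℝ) ≤ (φ 0 (m k + c) : ℝ) := by
      exact_mod_cast mono 0 (m k - c) (m k + c) (by linarith [hmc k, hc]) (by linarith)
    gcongr
  have hqpK : ∀ k, q k ≤ p k + (φ 0 (2 * c + c) : ℝ) / m k := by
    intro k
    have hck : c ≤ m k := by linarith [hmc k, hc]
    have e := hadd 0 (m k - c) (2 * c) (by linarith) (by linarith)
    have h2 : m k + c = (m k - c) + 2 * c := by ring
    have hb : (φ (0 + (m k - c)) (2 * c) : ℝ) ≤ (φ 0 (2 * c + c) : ℝ) := hU _ _ (by linarith)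
    have e2 : (φ 0 (m k + c) : ℝ) ≤ (φ 0 (m k - c) : ℝ) + (φ 0 (2 * c + c) : ℝ) := by
      rw [h2, e]; push_cast; linarith
    simp only [hpdef, hqdef]
    rw [← add_div, div_le_div_iff₀ (hmpos k) (hmpos k)]
    nlinarith [hmpos k]
  -- the candidate density
  have hpmono : Monotone p := monotone_nat_of_le_succ hp_mono
  have hqanti : Antitone q := antitone_nat_of_succ_le hq_anti
  have hbdd : BddAbove (Set.range p) := by
    refine ⟨q 0, ?_⟩
    rintro _ ⟨k, rfl⟩
    exact (hpq k).trans (hqanti (Nat.zero_le k))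
  set d := ⨆ k, p k with hddef
  have hdp : ∀ k, p k ≤ d := fun k => le_ciSup hbdd k
  have hdq : ∀ k, d ≤ q k := by
    intro k
    apply ciSup_le
    intro j
    rcases le_total j k with hj | hj
    · exact (hpmono hj).trans (hpq k)
    · exact (hpq j).trans (hqanti hj)
  have hd0 : 0 < d := by
    have h1 : (1 : ℝ) ≤ (φ 0 (m 0 - c) : ℝ) := by
      have := mono 0 c (m 0 - c) hc.le (by linarith [hmc 0])
      have := hpt 0
      exact_mod_cast by omega
    have : 0 < p 0 := by
      simp only [hpdef]
      exact div_pos (by linarith) (hmpos 0)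
    exact lt_of_lt_of_le this (hdp 0)
  -- block bounds by induction
  have hblock : ∀ (k : ℕ) (j : ℕ) (x : ℝ),
      (j : ℝ) * (φ 0 (m k - c) : ℝ) ≤ (φ x ((j : ℝ) * m k) : ℝ) ∧
      (φ x ((j : ℝ) * m k) : ℝ) ≤ (j : ℝ) * (φ 0 (m k + c) : ℝ) := by
    intro k j
    induction j with
    | zero =>
      intro x
      have h0 : φ x 0 = 0 := by
        have := hadd x 0 0 le_rfl le_rfl
        simp at this
        omega
      simp [h0]
    | succ j ih =>
      intro x
      have hjm : (0:ℝ) ≤ (j:ℝ) * m k := mul_nonneg (Nat.cast_nonneg j) (hmpos k).le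
      have e := hadd x ((j:ℝ) * m k) (m k) hjm (hmpos k).le
      have h2 : ((j+1:ℕ) : ℝ) * m k = (j:ℝ) * m k + m k := by push_cast; ring
      obtain ⟨ih1, ih2⟩ := ih x
      constructor
      · rw [h2, e]
        have hlo := hLoq (x + (j:ℝ) * m k) k
        push_cast
        linarith
      · rw [h2, e]
        have hup := hUq (x + (j:ℝ) * m k) k
        push_cast
        linarith
  -- main argument
  refine ⟨d, hd0, ?_⟩
  intro η hη
  set K := (φ 0 (2 * c + c) : ℝ) with hKdef
  have hK0 : 0 ≤ K := Nat.cast_nonneg _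
  obtain ⟨k, hk⟩ : ∃ k : ℕ, K / m k < η / 2 := by
    obtain ⟨k, hkk⟩ := exists_nat_gt (max 1 (K / (η / 2 * (2 * c))))
    refine ⟨k, ?_⟩
    have h2k : (k:ℝ) ≤ 2 ^ k := by exact_mod_cast (Nat.lt_two_pow_self (n := k)).le
    have hm : K / (η / 2 * (2 * c)) < (2:ℝ) ^ k :=
      lt_of_lt_of_le (lt_of_le_of_lt (le_max_right _ _) hkk) h2k
    have hpos : (0:ℝ) < η / 2 * (2 * c) := by positivity
    have hKlt : K < 2 ^ k * (η / 2 * (2 * c)) := by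
      have := (div_lt_iff₀ hpos).mp hm
      linarith
    have hmk : m k = 2 * c * 2 ^ k := by simp [hmdef]
    rw [div_lt_iff₀ (hmpos k), hmk]
    nlinarith
  set M := m k with hM
  have hM0 : 0 < M := hmpos k
  have hMc : c ≤ M := by have := hmc k; rw [← hM] at this; linarith
  refine ⟨M + 2 * (φ 0 (M + c) : ℝ) / η + 1, ?_⟩
  intro x h hh
  have hUM0 : (0:ℝ) ≤ (φ 0 (M + c) : ℝ) := Nat.cast_nonneg _
  have hLM0 : (0:ℝ) ≤ (φ 0 (M - c) : ℝ) := Nat.cast_nonneg _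
  have hdiv0 : (0:ℝ) ≤ 2 * (φ 0 (M + c) : ℝ) / η := by positivity
  have hhM : M < h := by linarith
  have hh0 : 0 < h := hM0.trans hhM
  have htail : (φ 0 (M + c) : ℝ) / h < η / 2 := by
    rw [div_lt_iff₀ hh0]
    have h1 : η / 2 * (M + 2 * (φ 0 (M + c) : ℝ) / η + 1) < η / 2 * h :=
      mul_lt_mul_of_pos_left hh (by positivity)
    have h2 : η / 2 * (M + 2 * (φ 0 (M + c) : ℝ) / η + 1)
        = η / 2 * M + (φ 0 (M + c) : ℝ) + η / 2 := by
      field_simp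
    nlinarith [hM0, hη]
  set j := ⌊h / M⌋₊ with hjdef
  have hjfl : (j:ℝ) ≤ h / M := Nat.floor_le (by positivity)
  have hjfl2 : h / M < (j:ℝ) + 1 := Nat.lt_floor_add_one (h / M)
  have hjle : (j:ℝ) * M ≤ h := by
    have := mul_le_mul_of_nonneg_right hjfl hM0.le
    rwa [div_mul_cancel₀ h hM0.ne'] at this
  have hjlt : h < ((j:ℝ) + 1) * M := by
    have := mul_lt_mul_of_pos_right hjfl2 hM0
    rwa [div_mul_cancel₀ h hM0.ne'] at this
  obtain ⟨hb1, -⟩ := hblock k j x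
  obtain ⟨-, hb2⟩ := hblock k (j + 1) x
  rw [← hM] at hb1 hb2
  have hlow : (j:ℝ) * (φ 0 (M - c) : ℝ) ≤ (φ x h : ℝ) := by
    refine hb1.trans ?_
    exact_mod_cast mono x ((j:ℝ) * M) h (mul_nonneg (Nat.cast_nonneg j) hM0.le) hjle
  have hhigh : (φ x h : ℝ) ≤ ((j:ℝ) + 1) * (φ 0 (M + c) : ℝ) := by
    have hcast : ((j+1:ℕ):ℝ) * M = ((j:ℝ) + 1) * M := by push_cast; ring
    rw [hcast] at hb2
    refine le_trans ?_ (le_trans hb2 (by push_cast; exact le_refl _))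
    exact_mod_cast mono x h (((j:ℝ) + 1) * M) hh0.le hjlt.le
  have hpk : p k = (φ 0 (M - c) : ℝ) / M := rfl
  have hqk : q k = (φ 0 (M + c) : ℝ) / M := rfl
  have hLM : (φ 0 (M - c) : ℝ) ≤ (φ 0 (M + c) : ℝ) := by
    exact_mod_cast mono 0 (M - c) (M + c) (by linarith) (by linarith)
  have hdqk := hdq k
  have hdpk := hdp k
  have hqpKk := hqpK k
  rw [hqk] at hdqk
  rw [hpk] at hdpk
  rw [hpk, hqk, ← hM] at hqpKk
  rw [abs_sub_lt_iff]
  constructor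
  · -- upper bound
    have u1 : (φ x h : ℝ) / h ≤ (((j:ℝ) + 1) * (φ 0 (M + c) : ℝ)) / h :=
      div_le_div_of_nonneg_right hhigh hh0.le
    have u2 : (((j:ℝ) + 1) * (φ 0 (M + c) : ℝ)) / h
        ≤ ((h / M + 1) * (φ 0 (M + c) : ℝ)) / h :=
      div_le_div_of_nonneg_right
        (mul_le_mul_of_nonneg_right (by linarith) hUM0) hh0.le
    have u3 : ((h / M + 1) * (φ 0 (M + c) : ℝ)) / h
        = (φ 0 (M + c) : ℝ) / M + (φ 0 (M + c) : ℝ) / h := by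
      field_simp
    linarith [hk, htail]
  · -- lower bound
    have l1 : ((h / M - 1) * (φ 0 (M - c) : ℝ)) / h ≤ ((j:ℝ) * (φ 0 (M - c) : ℝ)) / h :=
      div_le_div_of_nonneg_right
        (mul_le_mul_of_nonneg_right (by linarith) hLM0) hh0.le
    have l2 : ((h / M - 1) * (φ 0 (M - c) : ℝ)) / h
        = (φ 0 (M - c) : ℝ) / M - (φ 0 (M - c) : ℝ) / h := by
      field_simp
    have l3 : ((j:ℝ) * (φ 0 (M - c) : ℝ)) / h ≤ (φ x h : ℝ) / h :=
      div_le_div_of_nonneg_right hlow hh0.le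
    have l5 : (φ 0 (M - c) : ℝ) / h ≤ (φ 0 (M + c) : ℝ) / h :=
      div_le_div_of_nonneg_right hLM hh0.le
    linarith [hk, htail]


/-- an almost periodic set has a strictly positive density `d`:
`#(A ∩ I)/l(I) → d` uniformly as the length of the half-interval `I` tends to infinity. -/
theorem ap_set_density (a : ℤ → ℝ)
    (hfin : ∀ x y : ℝ, {n : ℤ | a n ∈ Set.Icc x y}.Finite)
    (hap : IsAPSet a) :
    ∃ d > (0:ℝ), ∀ η > (0:ℝ), ∃ N : ℝ, ∀ x : ℝ, ∀ h : ℝ, N < h →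
      |(Nat.card {n : ℤ | a n ∈ Set.Ico x (x + h)} : ℝ) / h - d| < η := by
  obtain ⟨L, hL, hE⟩ := hap 1 one_pos
  exact density_abstract (fun x h => Nat.card {n : ℤ | a n ∈ Set.Ico x (x + h)}) (L + 2)
    (by linarith)
    (fun x h₁ h₂ h1 h2 => cnt_add a hfin x h₁ h₂ h1 h2)
    (fun x y h hh => cnt_comp a hfin L hE x y h hh)
    (fun y => cnt_pt a hfin L hE y)
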